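/- Let a : ℝ → ℝ be twice continuously differentiable with a(x) ≥ 0 for all x ∈ ℝ, and suppose there is M₁ > 0 with |a''(x)| ≤ M₁ for all x ∈ ℝ. Then |a'(x)|² ≤ 2 M₁ a(x) for all x ∈ ℝ. -/

import Mathlib

open Set

lemma glaeser_key (a : ℝ → ℝ) (ha : ContDiff ℝ 2 a)
    (ha_nonneg : ∀ x, 0 ≤ a x) (M₁ : ℝ)
    (hbound : ∀ x, |deriv (deriv a) x| ≤ M₁)
    (x h : ℝ) (hh : 0 ≤ h) :
    0 ≤ a x + deriv a x * h + M₁ * h ^ 2 / 2 := by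
  have hda : Differentiable ℝ a := ha.differentiable (by norm_num)
  have hda' : Differentiable ℝ (deriv a) := by
    have h2 : ContDiff ℝ ((1 : ℕ) + 1) a := by exact_mod_cast ha
    rw [contDiff_succ_iff_deriv] at h2
    exact h2.2.2.differentiable (by norm_num)
  -- Lipschitz bound for deriv a
  have hlip : ∀ s t : ℝ, |deriv a s - deriv a t| ≤ M₁ * |s - t| := by
    intro s t
    have := Convex.norm_image_sub_le_of_norm_deriv_le (f := deriv a) (s := univ)
      (fun y _ => (hda' y)) (fun y _ => by simpa using hbound y) convex_univ
      (mem_univ t) (mem_univ s)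
    simpa [Real.norm_eq_abs] using this
  set ψ : ℝ → ℝ := fun t => a x + deriv a x * t + M₁ * t ^ 2 / 2 - a (x + t) with hψdef
  have hψ : ∀ t : ℝ, HasDerivAt ψ (deriv a x + M₁ * t - deriv a (x + t)) t := by
    intro t
    have h1 : HasDerivAt (fun t : ℝ => a x + deriv a x * t + M₁ * t ^ 2 / 2)
        (deriv a x + M₁ * t) t := by
      have : HasDerivAt (fun t : ℝ => a x + deriv a x * t + M₁ * t ^ 2 / 2)
          (0 + deriv a x * 1 + M₁ * (2 * t ^ 1) / 2) t := by
        exact (((hasDerivAt_const t (a x)).add ((hasDerivAt_id t).const_mul (deriv a x))).add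
          (((hasDerivAt_pow 2 t).const_mul M₁).div_const 2))
      convert this using 1; ring
    have h2 : HasDerivAt (fun t : ℝ => a (x + t)) (deriv a (x + t)) t := by
      have := ((hda (x + t)).hasDerivAt).comp t ((hasDerivAt_const t x).add (hasDerivAt_id t))
      simpa [Function.comp_def] using this
    exact h1.sub h2
  have hmono : MonotoneOn ψ (Ici (0 : ℝ)) := by
    apply monotoneOn_of_deriv_nonneg (convex_Ici 0)
    · exact (Continuous.continuousOn (by fun_prop))
    · intro t ht
      exact ((hψ t).differentiableAt).differentiableWithinAt
    · intro t ht
      rw [interior_Ici] at ht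
      rw [(hψ t).deriv]
      have := hlip (x + t) x
      have habs : |x + t - x| = t := by rw [show x + t - x = t by ring, abs_of_pos ht]
      rw [habs] at this
      have := abs_le.1 this
      linarith [this.2]
  have h0 : ψ 0 ≤ ψ h := hmono (self_mem_Ici) hh hh
  have hψ0 : ψ 0 = 0 := by simp [hψdef]
  have := ha_nonneg (x + h)
  simp only [hψdef] at h0
  norm_num at h0
  linarith

lemma glaeser_key' (a : ℝ → ℝ) (ha : ContDiff ℝ 2 a)
    (ha_nonneg : ∀ x, 0 ≤ a x) (M₁ : ℝ)
    (hbound : ∀ x, |deriv (deriv a) x| ≤ M₁)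
    (x h : ℝ) :
    0 ≤ a x + deriv a x * h + M₁ * h ^ 2 / 2 := by
  rcases le_or_gt 0 h with hh | hh
  · exact glaeser_key a ha ha_nonneg M₁ hbound x h hh
  · set g : ℝ → ℝ := fun y => a (-y) with hg
    have hgc : ContDiff ℝ 2 g := ha.comp (contDiff_neg)
    have hgd : ∀ y, deriv g y = -deriv a (-y) := fun y => deriv_comp_neg a y
    have hgdd : ∀ y, deriv (deriv g) y = deriv (deriv a) (-y) := by
      intro y
      have : deriv g = fun y => -deriv a (-y) := funext hgd
      rw [this, deriv.fun_neg, deriv_comp_neg (deriv a)]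
      ring
    have key := glaeser_key g hgc (fun y => ha_nonneg (-y)) M₁
      (fun y => by rw [hgdd]; exact hbound (-y)) (-x) (-h) (by linarith)
    rw [hgd (-x)] at key
    simp only [hg, neg_neg, hgd (-x)] at key
    linarith [key]

/-- Glaeser's inequality in one dimension: if `a : ℝ → ℝ` is twice continuously
differentiable, nonnegative, and its second derivative is bounded by `M₁ > 0`,
then `|a'(x)|² ≤ 2 M₁ a(x)` for all `x`. -/
theorem glaeser_inequality (a : ℝ → ℝ) (ha : ContDiff ℝ 2 a)
    (ha_nonneg : ∀ x, 0 ≤ a x) (M₁ : ℝ) (hM₁ : 0 < M₁)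
    (hbound : ∀ x, |deriv (deriv a) x| ≤ M₁) :
    ∀ x, |deriv a x| ^ 2 ≤ 2 * M₁ * a x := by
  intro x
  have key := glaeser_key' a ha ha_nonneg M₁ hbound x (-(deriv a x) / M₁)
  rw [sq_abs]
  have hM₁' : M₁ ≠ 0 := ne_of_gt hM₁
  have : deriv a x * (-(deriv a x) / M₁) = -(deriv a x ^ 2) / M₁ := by ring
  rw [div_pow, neg_sq] at key
  rw [this] at key
  have h1 : -(deriv a x ^ 2) / M₁ = -(deriv a x ^ 2 / M₁) := by ring
  have h2 : M₁ * (deriv a x ^ 2 / M₁ ^ 2) / 2 = deriv a x ^ 2 / M₁ / 2 := by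
    field_simp
  rw [h1, h2] at key
  have h3 : deriv a x ^ 2 / M₁ / 2 ≤ a x := by linarith
  calc deriv a x ^ 2 = 2 * M₁ * (deriv a x ^ 2 / M₁ / 2) := by field_simp
    _ ≤ 2 * M₁ * a x := by
        apply mul_le_mul_of_nonneg_left h3 (by linarith)
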